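/- Suppose (e_i) is an unconditional basis and the isomorphism class 𝒜 = { A ⊆ ℕ : [e_i]_A ≅ [e_i]_ℕ } is comeagre in 2^ℕ. Then [e_i]_ℕ is isomorphic to its square [e_i]_ℕ ⊕ [e_i]_ℕ. -/

import Mathlib

set_option maxHeartbeats 1000000

/-- `(e_i)` is an unconditional basic sequence with constant `K`. -/
def IsUnconditionalWithConstant {E : Type*} [NormedAddCommGroup E] [NormedSpace ℝ E]
    (e : ℕ → E) (K : ℝ) : Prop :=
  ∀ (n : ℕ) (A : Finset ℕ) (a : ℕ → ℝ), A ⊆ Finset.range (n + 1) →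
    ‖∑ i ∈ A, a i • e i‖ ≤ K * ‖∑ i ∈ Finset.range (n + 1), a i • e i‖

/-- The closed linear span of `(e_i)_{i ∈ S}`. -/
def closedSpan {E : Type*} [NormedAddCommGroup E] [NormedSpace ℝ E]
    (e : ℕ → E) (S : Set ℕ) : Submodule ℝ E :=
  (Submodule.span ℝ (e '' S)).topologicalClosure

section Topology

/-- Preimage of a meagre set under a continuous open map is meagre. -/
lemma isMeagre_preimage' {α β : Type*} [TopologicalSpace α] [TopologicalSpace β]
    {f : α → β} (hc : Continuous f) (ho : IsOpenMap f) {s : Set β} (hs : IsMeagre s) :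
    IsMeagre (f ⁻¹' s) := by
  rw [isMeagre_iff_countable_union_isNowhereDense] at hs ⊢
  obtain ⟨S, hS1, hS2, hS3⟩ := hs
  refine ⟨(fun t => f ⁻¹' t) '' S, ?_, hS2.image _, ?_⟩
  · rintro _ ⟨t, ht, rfl⟩
    have hnd : interior (closure t) = ∅ := hS1 t ht
    have h1 : closure (f ⁻¹' t) ⊆ f ⁻¹' closure t :=
      closure_minimal (Set.preimage_mono subset_closure) (isClosed_closure.preimage hc)
    have h2 : interior (f ⁻¹' closure t) = ∅ := by
      by_contra h
      have himg0 : f '' interior (f ⁻¹' closure t) ⊆ closure t := by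
        rintro _ ⟨x, hx, rfl⟩
        exact (interior_subset hx : x ∈ f ⁻¹' closure t)
      have himg : f '' interior (f ⁻¹' closure t) ⊆ interior (closure t) :=
        interior_maximal himg0 (ho _ isOpen_interior)
      rw [hnd, Set.subset_empty_iff, Set.image_eq_empty] at himg
      exact h himg
    have : interior (closure (f ⁻¹' t)) ⊆ (∅ : Set α) := by
      rw [← h2]; exact interior_mono h1
    exact Set.subset_empty_iff.1 this
  · intro x hx
    obtain ⟨t, ht, hxt⟩ := hS3 hx
    exact ⟨f ⁻¹' t, ⟨t, ht, rfl⟩, hxt⟩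

/-- A coordinatewise surjective map between discrete-fiber product spaces is open. -/
lemma isOpenMap_coordwise {A B : Type*} [TopologicalSpace A] [TopologicalSpace B]
    [DiscreteTopology B]
    (g : A → B) (hg : Function.Surjective g) :
    IsOpenMap (fun (ω : ℕ → A) (n : ℕ) => g (ω n)) := by
  intro U hU
  rw [isOpen_iff_mem_nhds]
  rintro y ⟨ω, hωU, rfl⟩
  obtain ⟨I, u, hu, hsub⟩ := isOpen_pi_iff.1 hU ω hωU
  rw [mem_nhds_iff]
  choose pre hpre using hg
  refine ⟨(I : Set ℕ).pi (fun n => {g (ω n)}), ?_, isOpen_set_pi I.finite_toSet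
    (fun _ _ => isOpen_discrete _), Set.mem_pi.2 (fun n _ => rfl)⟩
  intro y' hy'
  refine ⟨fun n => if n ∈ I then ω n else pre (y' n), hsub ?_, ?_⟩
  · intro n hn
    show (if n ∈ I then ω n else pre (y' n)) ∈ u n
    rw [if_pos (Finset.mem_coe.1 hn)]
    exact (hu n (Finset.mem_coe.1 hn)).2
  · funext n
    show g (if n ∈ I then ω n else pre (y' n)) = y' n
    by_cases hn : n ∈ I
    · rw [if_pos hn]
      exact (Set.mem_singleton_iff.1 (Set.mem_pi.1 hy' n hn)).symm
    · rw [if_neg hn, hpre]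

end Topology

section Analysis

variable {E : Type*} [NormedAddCommGroup E] [NormedSpace ℝ E]

lemma key_finset {e : ℕ → E} {K : ℝ}
    (huncond : IsUnconditionalWithConstant e K) (c : ℕ → ℝ) {F G : Finset ℕ} (hFG : F ⊆ G) :
    ‖∑ i ∈ F, c i • e i‖ ≤ K * ‖∑ i ∈ G, c i • e i‖ := by
  set n := G.sup id with hn
  have hG : G ⊆ Finset.range (n + 1) := fun i hi =>
    Finset.mem_range.2 (Nat.lt_succ_of_le (Finset.le_sup (f := id) hi))
  set c' : ℕ → ℝ := fun i => if i ∈ G then c i else 0 with hc'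
  have h1 : ∑ i ∈ F, c i • e i = ∑ i ∈ F, c' i • e i :=
    Finset.sum_congr rfl (fun i hi => by simp [hc', hFG hi])
  have h2 : ∑ i ∈ Finset.range (n + 1), c' i • e i = ∑ i ∈ G, c i • e i := by
    rw [← Finset.sum_subset hG (fun i _ hi => by simp [hc', hi])]
    exact Finset.sum_congr rfl fun i hi => by simp [hc', hi]
  rw [h1, ← h2]
  exact huncond n F c' (hFG.trans hG)

lemma span_repr (e : ℕ → E) (S : Set ℕ) {u : E}
    (hu : u ∈ Submodule.span ℝ (e '' S)) :
    ∃ a : ℕ →₀ ℝ, (↑a.support : Set ℕ) ⊆ S ∧ u = ∑ i ∈ a.support, a i • e i := by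
  rw [Finsupp.mem_span_image_iff_linearCombination] at hu
  obtain ⟨l, hl, rfl⟩ := hu
  refine ⟨l, (Finsupp.mem_supported _ _).1 hl, ?_⟩
  rw [Finsupp.linearCombination_apply, Finsupp.sum]

lemma span_ineq {e : ℕ → E} {K : ℝ}
    (huncond : IsUnconditionalWithConstant e K) {S T : Set ℕ} (hST : Disjoint S T)
    {u v : E} (hu : u ∈ Submodule.span ℝ (e '' S)) (hv : v ∈ Submodule.span ℝ (e '' T)) :
    ‖u‖ ≤ K * ‖u + v‖ := by
  obtain ⟨a, haS, rfl⟩ := span_repr e S hu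
  obtain ⟨b, hbT, rfl⟩ := span_repr e T hv
  have hdisj : Disjoint a.support b.support := by
    rw [Finset.disjoint_left]
    intro i hia hib
    exact (hST.le_bot ⟨haS hia, hbT hib⟩ : i ∈ (∅ : Set ℕ))
  set c : ℕ → ℝ := fun i => a i + b i with hc
  have hb0 : ∀ i ∈ a.support, b i = 0 := fun i hi =>
    Finsupp.notMem_support_iff.1 (Finset.disjoint_left.1 hdisj hi)
  have ha0 : ∀ i ∈ b.support, a i = 0 := fun i hi =>
    Finsupp.notMem_support_iff.1 (Finset.disjoint_right.1 hdisj hi)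
  have h1 : ∑ i ∈ a.support, a i • e i = ∑ i ∈ a.support, c i • e i :=
    Finset.sum_congr rfl fun i hi => by simp [hc, hb0 i hi]
  have h2 : (∑ i ∈ a.support, a i • e i) + (∑ i ∈ b.support, b i • e i)
      = ∑ i ∈ a.support ∪ b.support, c i • e i := by
    rw [Finset.sum_union hdisj, h1]
    congr 1
    exact Finset.sum_congr rfl fun i hi => by simp [hc, ha0 i hi]
  calc ‖∑ i ∈ a.support, a i • e i‖ = ‖∑ i ∈ a.support, c i • e i‖ := by rw [← h1]
    _ ≤ K * ‖∑ i ∈ a.support ∪ b.support, c i • e i‖ :=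
        key_finset huncond c Finset.subset_union_left
    _ = K * ‖(∑ i ∈ a.support, a i • e i) + (∑ i ∈ b.support, b i • e i)‖ := by rw [h2]

lemma closedSpan_ineq {e : ℕ → E} {K : ℝ}
    (huncond : IsUnconditionalWithConstant e K) {S T : Set ℕ} (hST : Disjoint S T)
    {u v : E} (hu : u ∈ closedSpan e S) (hv : v ∈ closedSpan e T) :
    ‖u‖ ≤ K * ‖u + v‖ := by
  have hZ : IsClosed {p : E × E | ‖p.1‖ ≤ K * ‖p.1 + p.2‖} :=
    isClosed_le (continuous_fst.norm) (continuous_const.mul ((continuous_fst.add continuous_snd).norm))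
  have hsub : (Submodule.span ℝ (e '' S) : Set E) ×ˢ (Submodule.span ℝ (e '' T) : Set E)
      ⊆ {p : E × E | ‖p.1‖ ≤ K * ‖p.1 + p.2‖} := fun p hp =>
    span_ineq huncond hST hp.1 hp.2
  have hu' : u ∈ closure (Submodule.span ℝ (e '' S) : Set E) := by
    rw [← Submodule.topologicalClosure_coe]; exact hu
  have hv' : v ∈ closure (Submodule.span ℝ (e '' T) : Set E) := by
    rw [← Submodule.topologicalClosure_coe]; exact hv
  have : (u, v) ∈ closure ((Submodule.span ℝ (e '' S) : Set E) ×ˢ (Submodule.span ℝ (e '' T) : Set E)) := by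
    rw [closure_prod_eq]
    exact ⟨hu', hv'⟩
  exact hZ.closure_subset ((closure_mono hsub) this)

end Analysis

theorem comeagre_class_square {X : Type*} [NormedAddCommGroup X] [NormedSpace ℝ X]
    [CompleteSpace X] (e : ℕ → X) (K : ℝ) (hK : 1 ≤ K) (hne : ∀ i, e i ≠ 0)
    (huncond : IsUnconditionalWithConstant e K)
    (hbasis : closedSpan e Set.univ = ⊤)
    (hcomeagre :
      IsMeagre {A : ℕ → Bool |
        Nonempty ((closedSpan e {i : ℕ | A i = true}) ≃L[ℝ] X)}ᶜ) :
    Nonempty (X ≃L[ℝ] X × X) := by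
  classical
  set 𝒜 : Set (ℕ → Bool) :=
    {A : ℕ → Bool | Nonempty ((closedSpan e {i : ℕ | A i = true}) ≃L[ℝ] X)} with h𝒜
  -- three coordinatewise maps from (ℕ → Bool × Bool)
  set g0 : Bool × Bool → Bool := fun p => p.1 && !p.2 with hg0
  set g1 : Bool × Bool → Bool := fun p => p.2 && !p.1 with hg1
  set g2 : Bool × Bool → Bool := fun p => (p.1 && !p.2) || (p.2 && !p.1) with hg2
  have hg0s : Function.Surjective g0 := fun b => ⟨(b, false), by cases b <;> rfl⟩
  have hg1s : Function.Surjective g1 := fun b => ⟨(false, b), by cases b <;> rfl⟩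
  have hg2s : Function.Surjective g2 := fun b => ⟨(b, false), by cases b <;> rfl⟩
  set F0 : (ℕ → Bool × Bool) → (ℕ → Bool) := fun ω n => g0 (ω n) with hF0
  set F1 : (ℕ → Bool × Bool) → (ℕ → Bool) := fun ω n => g1 (ω n) with hF1
  set F2 : (ℕ → Bool × Bool) → (ℕ → Bool) := fun ω n => g2 (ω n) with hF2
  have hcont : ∀ g : Bool × Bool → Bool, Continuous (fun (ω : ℕ → Bool × Bool) n => g (ω n)) :=
    fun g => continuous_pi fun n => (continuous_of_discreteTopology).comp (continuous_apply n)
  have hm0 : IsMeagre (F0 ⁻¹' 𝒜ᶜ) :=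
    isMeagre_preimage' (hcont g0) (isOpenMap_coordwise g0 hg0s) hcomeagre
  have hm1 : IsMeagre (F1 ⁻¹' 𝒜ᶜ) :=
    isMeagre_preimage' (hcont g1) (isOpenMap_coordwise g1 hg1s) hcomeagre
  have hm2 : IsMeagre (F2 ⁻¹' 𝒜ᶜ) :=
    isMeagre_preimage' (hcont g2) (isOpenMap_coordwise g2 hg2s) hcomeagre
  have hmU : IsMeagre ((F0 ⁻¹' 𝒜ᶜ) ∪ (F1 ⁻¹' 𝒜ᶜ) ∪ (F2 ⁻¹' 𝒜ᶜ)) :=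
    by
      show _ᶜ ∈ residual _
      rw [Set.compl_union, Set.compl_union]
      exact Filter.inter_mem (Filter.inter_mem hm0 hm1) hm2
  haveI : BaireSpace (ℕ → Bool × Bool) := BaireSpace.of_t2Space_locallyCompactSpace
  have hdense : Dense ((F0 ⁻¹' 𝒜ᶜ) ∪ (F1 ⁻¹' 𝒜ᶜ) ∪ (F2 ⁻¹' 𝒜ᶜ))ᶜ :=
    dense_of_mem_residual hmU
  obtain ⟨ω, hω⟩ := hdense.nonempty
  simp only [Set.mem_compl_iff, Set.mem_union, not_or, Set.mem_preimage] at hω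
  obtain ⟨⟨hω0, hω1⟩, hω2⟩ := hω
  rw [not_not] at hω0 hω1 hω2
  -- the three sets
  set S0 : Set ℕ := {i | F0 ω i = true} with hS0
  set S1 : Set ℕ := {i | F1 ω i = true} with hS1
  obtain ⟨φ0⟩ : Nonempty ((closedSpan e S0) ≃L[ℝ] X) := hω0
  obtain ⟨φ1⟩ : Nonempty ((closedSpan e S1) ≃L[ℝ] X) := hω1
  have hunion : {i | F2 ω i = true} = S0 ∪ S1 := by
    ext i
    simp only [hS0, hS1, hF0, hF1, hF2, hg0, hg1, hg2, Set.mem_setOf_eq, Set.mem_union,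
      Bool.or_eq_true]
  obtain ⟨φ2⟩ : Nonempty ((closedSpan e (S0 ∪ S1)) ≃L[ℝ] X) := hunion ▸ hω2
  have hdisjS : Disjoint S0 S1 := by
    rw [Set.disjoint_left]
    intro i h0 h1
    have e0 : g0 (ω i) = true := h0
    have e1 : g1 (ω i) = true := h1
    rw [hg0] at e0
    rw [hg1] at e1
    rcases ω i with ⟨a, b⟩
    cases a <;> cases b <;> simp_all
  -- the isomorphism closedSpan (S0 ∪ S1) ≃ closedSpan S0 × closedSpan S1
  set M0 := closedSpan e S0 with hM0
  set M1 := closedSpan e S1 with hM1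
  set M := closedSpan e (S0 ∪ S1) with hM
  have h0M : M0 ≤ M := Submodule.topologicalClosure_mono
    (Submodule.span_mono (Set.image_mono Set.subset_union_left))
  have h1M : M1 ≤ M := Submodule.topologicalClosure_mono
    (Submodule.span_mono (Set.image_mono Set.subset_union_right))
  haveI hc0 : CompleteSpace M0 :=
    (Submodule.isClosed_topologicalClosure _).completeSpace_coe
  haveI hc1 : CompleteSpace M1 :=
    (Submodule.isClosed_topologicalClosure _).completeSpace_coe
  haveI hcM : CompleteSpace M :=
    (Submodule.isClosed_topologicalClosure _).completeSpace_coe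
  have hK0 : (0:ℝ) ≤ K := le_trans zero_le_one hK
  -- the key inequality
  have hkey : ∀ (u v : X), u ∈ M0 → v ∈ M1 → ‖u‖ ≤ K * ‖u + v‖ := fun u v hu hv =>
    closedSpan_ineq huncond hdisjS hu hv
  -- linear map
  set ψlin : (M0 × M1) →ₗ[ℝ] M :=
    { toFun := fun p => ⟨(p.1 : X) + (p.2 : X), M.add_mem (h0M p.1.2) (h1M p.2.2)⟩
      map_add' := fun p q => by
        apply Subtype.ext
        show ((p + q).1 : X) + ((p + q).2 : X) = _
        rw [Prod.fst_add, Prod.snd_add]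
        push_cast
        abel
      map_smul' := fun c p => by
        apply Subtype.ext
        show ((c • p).1 : X) + ((c • p).2 : X) = _
        rw [Prod.smul_fst, Prod.smul_snd]
        push_cast
        simp [smul_add] } with hψlin
  have hψbound : ∀ p : M0 × M1, ‖ψlin p‖ ≤ 2 * ‖p‖ := by
    intro p
    have : ‖ψlin p‖ = ‖(p.1 : X) + (p.2 : X)‖ := rfl
    rw [this]
    calc ‖(p.1 : X) + (p.2 : X)‖ ≤ ‖(p.1 : X)‖ + ‖(p.2 : X)‖ := norm_add_le _ _
      _ ≤ ‖p‖ + ‖p‖ := add_le_add (norm_fst_le p) (norm_snd_le p)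
      _ = 2 * ‖p‖ := by ring
  set ψ : (M0 × M1) →L[ℝ] M := LinearMap.mkContinuous ψlin 2 hψbound with hψ
  -- antilipschitz
  set C : NNReal := ⟨2 * K + 1, by linarith⟩ with hC
  have hanti : AntilipschitzWith C ψ := by
    apply AntilipschitzWith.of_le_mul_dist
    intro p q
    have hdp : dist p q = max (dist p.1 q.1) (dist p.2 q.2) := Prod.dist_eq
    have hd1 : dist p.1 q.1 = ‖(p.1 : X) - (q.1 : X)‖ := by
      rw [Subtype.dist_eq, dist_eq_norm]
    have hd2 : dist p.2 q.2 = ‖(p.2 : X) - (q.2 : X)‖ := by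
      rw [Subtype.dist_eq, dist_eq_norm]
    have hdψ : dist (ψ p) (ψ q) = ‖((p.1 : X) - q.1) + ((p.2 : X) - q.2)‖ := by
      rw [Subtype.dist_eq, dist_eq_norm]
      congr 1
      show ((p.1 : X) + p.2) - ((q.1 : X) + q.2) = ((p.1 : X) - q.1) + ((p.2 : X) - q.2)
      abel
    have hu : (p.1 : X) - q.1 ∈ M0 := M0.sub_mem p.1.2 q.1.2
    have hv : (p.2 : X) - q.2 ∈ M1 := M1.sub_mem p.2.2 q.2.2
    have h1 : ‖(p.1 : X) - q.1‖ ≤ K * ‖((p.1 : X) - q.1) + ((p.2 : X) - q.2)‖ :=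
      hkey _ _ hu hv
    have h2 : ‖(p.2 : X) - q.2‖ ≤ (K + 1) * ‖((p.1 : X) - q.1) + ((p.2 : X) - q.2)‖ := by
      have := norm_add_le ((p.1 : X) - q.1) (-(((p.1 : X) - q.1) + ((p.2 : X) - q.2)))
      have hrw : ((p.1 : X) - q.1) + (-(((p.1 : X) - q.1) + ((p.2 : X) - q.2)))
          = -((p.2 : X) - q.2) := by abel
      rw [hrw, norm_neg, norm_neg] at this
      linarith
    have hnn : (0:ℝ) ≤ ‖((p.1 : X) - q.1) + ((p.2 : X) - q.2)‖ := norm_nonneg _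
    rw [hdp, hd1, hd2, hdψ]
    have hCc : (C : ℝ) = 2 * K + 1 := rfl
    rw [hCc]
    apply max_le <;> nlinarith
  have hinj : Function.Injective ψ := hanti.injective
  -- surjectivity
  have hclosedrange : IsClosed (Set.range ψ) :=
    hanti.isClosed_range ψ.uniformContinuous
  have hsurj : Function.Surjective ψ := by
    intro m
    have hmem : m ∈ closure (Set.range ψ) := by
      have hds : (m : X) ∈ closure (Subtype.val '' (Set.range ψ)) := by
        have himg : (Submodule.span ℝ (e '' (S0 ∪ S1)) : Set X)
            ⊆ Subtype.val '' (Set.range ψ) := by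
          intro x hx
          rw [SetLike.mem_coe, Set.image_union, Submodule.span_union, Submodule.mem_sup] at hx
          obtain ⟨y, hy, z, hz, rfl⟩ := hx
          have hyM0 : y ∈ M0 := Submodule.le_topologicalClosure _ hy
          have hzM1 : z ∈ M1 := Submodule.le_topologicalClosure _ hz
          exact ⟨ψ (⟨y, hyM0⟩, ⟨z, hzM1⟩), ⟨_, rfl⟩, rfl⟩
        have h1 : (m : X) ∈ closure (Submodule.span ℝ (e '' (S0 ∪ S1)) : Set X) := by
          rw [← Submodule.topologicalClosure_coe]
          exact m.2
        exact closure_mono himg h1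
      rw [closure_subtype]
      exact hds
    rw [hclosedrange.closure_eq] at hmem
    exact hmem
  have hker : LinearMap.ker (ψ : (M0 × M1) →ₗ[ℝ] M) = ⊥ :=
    (LinearMap.ker_eq_bot (f := (ψ : (M0 × M1) →ₗ[ℝ] M))).2 hinj
  have hrange : LinearMap.range (ψ : (M0 × M1) →ₗ[ℝ] M) = ⊤ :=
    (LinearMap.range_eq_top (f := (ψ : (M0 × M1) →ₗ[ℝ] M))).2 hsurj
  set ψe : (M0 × M1) ≃L[ℝ] M := ContinuousLinearEquiv.ofBijective ψ hker hrange with hψe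
  exact ⟨φ2.symm.trans (ψe.symm.trans (φ0.prodCongr φ1))⟩
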